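/- For every integer n ≥ 2 there is a short exact sequence of D-D-bimodules 0 → B_1(1) → B_n(1) → B_{n−1}(1) → 0. -/

import Mathlib

open DualNumber TrivSqZeroExt

/-- Multiplication by `ε` on the dual numbers `D = F[x]/(x²)`, as an `F`-linear map.
Since `D` is commutative this is both the left and the right action of `x` on the
regular bimodule. -/
noncomputable def xD (F : Type) [Field F] : DualNumber F →ₗ[F] DualNumber F :=
  LinearMap.mulLeft F (eps : DualNumber F)

/-- The underlying `F`-vector space of the string bimodule `M_k`:
coordinates indexed by `Fin (2*k+3)`, where the Lean index `j` corresponds to the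
basis vector `m_{j+1}` of the paper. -/
abbrev Mcar (F : Type) [Field F] (k : ℕ) := Fin (2 * k + 3) → F

/-- The left action of `x` on `M_k`:  `x·m_{2j} = m_{2j+1}`, `x·m_odd = 0`. -/
def lM (F : Type) [Field F] (k : ℕ) : Mcar F k →ₗ[F] Mcar F k where
  toFun v := fun j =>
    if ((j : ℕ) % 2 = 0 ∧ (j : ℕ) ≠ 0) then
      v ⟨(j : ℕ) - 1, lt_of_le_of_lt (Nat.sub_le _ _) j.isLt⟩ else 0
  map_add' u v := by
    funext j; simp only [Pi.add_apply]; split_ifs <;> simp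
  map_smul' c v := by
    funext j; simp only [Pi.smul_apply]; split_ifs <;> simp

/-- The right action of `x` on `M_k`:  `m_{2j}·x = m_{2j-1}`, `m_odd·x = 0`. -/
def rM (F : Type) [Field F] (k : ℕ) : Mcar F k →ₗ[F] Mcar F k where
  toFun v := fun j =>
    if h : ((j : ℕ) % 2 = 0 ∧ (j : ℕ) < 2 * k + 2) then
      v ⟨(j : ℕ) + 1, Nat.succ_lt_succ h.2⟩ else 0
  map_add' u v := by
    funext j
    by_cases h : ((j : ℕ) % 2 = 0 ∧ (j : ℕ) < 2 * k + 2) <;> simp [h]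
  map_smul' c v := by
    funext j
    by_cases h : ((j : ℕ) % 2 = 0 ∧ (j : ℕ) < 2 * k + 2) <;> simp [h]

/-- The basis vector `m_{j+1}` of `M_k`. -/
def eM (F : Type) [Field F] (k : ℕ) (j : Fin (2 * k + 3)) : Mcar F k := Pi.single j 1

/-- A morphism of `D`-`D`-bimodules, where a bimodule is encoded as an `F`-vector
space together with the two (commuting, square-zero) operators giving the left and
right actions of `x`. -/
def IsBimodHom (F : Type) [Field F] {V W : Type} [AddCommGroup V] [Module F V]
    [AddCommGroup W] [Module F W] (lV rV : V →ₗ[F] V) (lW rW : W →ₗ[F] W)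
    (f : V →ₗ[F] W) : Prop :=
  f ∘ₗ lV = lW ∘ₗ f ∧ f ∘ₗ rV = rW ∘ₗ f

/-- `f` factors through the simple `D`-`D`-bimodule, i.e. the one-dimensional
bimodule `F` on which `x` acts as zero on both sides. -/
def FactorsThroughSimple (F : Type) [Field F] {V W : Type} [AddCommGroup V] [Module F V]
    [AddCommGroup W] [Module F W] (lV rV : V →ₗ[F] V) (lW rW : W →ₗ[F] W)
    (f : V →ₗ[F] W) : Prop :=
  ∃ (h : V →ₗ[F] F) (g : F →ₗ[F] W),
    IsBimodHom F lV rV 0 0 h ∧ IsBimodHom F 0 0 lW rW g ∧ f = g ∘ₗ h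

/-- The bimodule homomorphism `φ_k : M_k → D`, sending `m_j` to `1` for `j` even and
to `x` for `j` odd (paper numbering). -/
noncomputable def phi (F : Type) [Field F] (k : ℕ) : Mcar F k →ₗ[F] DualNumber F :=
  (Algebra.linearMap F (DualNumber F)) ∘ₗ
      (∑ j ∈ Finset.univ.filter (fun j : Fin (2 * k + 3) => (j : ℕ) % 2 = 1),
        LinearMap.proj j) +
    (TrivSqZeroExt.inrHom F F) ∘ₗ
      (∑ j ∈ Finset.univ.filter (fun j : Fin (2 * k + 3) => (j : ℕ) % 2 = 0),
        LinearMap.proj j)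

/-- The underlying space `F^n ⊕ F^n` of the band bimodule `B_n(1)`. -/
abbrev Bcar (F : Type) [Field F] (n : ℕ) := (Fin n → F) × (Fin n → F)

/-- The left action of `x` on the band bimodule `B_n(1)`: `x·(u,v) = (0,u)`. -/
def lB (F : Type) [Field F] (n : ℕ) : Bcar F n →ₗ[F] Bcar F n where
  toFun p := (0, p.1)
  map_add' u v := by simp
  map_smul' c v := by simp

/-- The `n×n` Jordan block with eigenvalue `1`, acting on `F^n`. -/
def jordan (F : Type) [Field F] (n : ℕ) : (Fin n → F) →ₗ[F] (Fin n → F) where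
  toFun u := fun i => u i + if h : 1 ≤ (i : ℕ) then u ⟨(i : ℕ) - 1, lt_of_le_of_lt (Nat.sub_le _ _) i.isLt⟩ else 0
  map_add' u v := by funext i; by_cases h : 1 ≤ (i : ℕ) <;> simp [h] <;> ring
  map_smul' c v := by funext i; by_cases h : 1 ≤ (i : ℕ) <;> simp [h] <;> ring

/-- The right action of `x` on the band bimodule `B_n(1)`: `(u,v)·x = (0, J_n u)`. -/
def rB (F : Type) [Field F] (n : ℕ) : Bcar F n →ₗ[F] Bcar F n where
  toFun p := (0, jordan F n p.1)
  map_add' u v := by simp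
  map_smul' c v := by simp

theorem stmt_11 (F : Type) [Field F] (n : ℕ) (hn : 2 ≤ n) :
    ∃ (f : Bcar F 1 →ₗ[F] Bcar F n) (g : Bcar F n →ₗ[F] Bcar F (n - 1)),
      IsBimodHom F (lB F 1) (rB F 1) (lB F n) (rB F n) f ∧
        IsBimodHom F (lB F n) (rB F n) (lB F (n - 1)) (rB F (n - 1)) g ∧
        Function.Injective f ∧ Function.Surjective g ∧
        LinearMap.range f = LinearMap.ker g := by
  have hlt : n - 1 < n := by omega
  have hle : n - 1 ≤ n := by omega
  set e : Fin n := ⟨n - 1, hlt⟩ with he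
  let f : Bcar F 1 →ₗ[F] Bcar F n :=
    { toFun := fun p => (fun i => if i = e then p.1 0 else 0,
        fun i => if i = e then p.2 0 else 0)
      map_add' := by
        intro p q
        refine Prod.ext ?_ ?_ <;> funext i <;> by_cases h : i = e <;> simp [h]
      map_smul' := by
        intro c p
        refine Prod.ext ?_ ?_ <;> funext i <;> by_cases h : i = e <;> simp [h] }
  let g : Bcar F n →ₗ[F] Bcar F (n - 1) :=
    { toFun := fun p => (fun j => p.1 (Fin.castLE hle j), fun j => p.2 (Fin.castLE hle j))
      map_add' := by intro p q; rfl
      map_smul' := by intro c p; rfl }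
  have key : ∀ (c : F), jordan F n (fun i => if i = e then c else 0)
      = fun i => if i = e then c else 0 := by
    intro c
    funext i
    simp only [jordan, LinearMap.coe_mk, AddHom.coe_mk]
    have h2 : ∀ h : 1 ≤ (i : ℕ),
        (⟨(i : ℕ) - 1, lt_of_le_of_lt (Nat.sub_le _ _) i.isLt⟩ : Fin n) ≠ e := by
      intro h hcon
      have := congrArg Fin.val hcon
      change (i : ℕ) - 1 = n - 1 at this
      have := i.isLt
      omega
    by_cases h : 1 ≤ (i : ℕ)
    · rw [dif_pos h, if_neg (h2 h), add_zero]
    · rw [dif_neg h, add_zero]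
  refine ⟨f, g, ⟨?_, ?_⟩, ⟨?_, ?_⟩, ?_, ?_, ?_⟩
  · refine LinearMap.ext fun p => Prod.ext ?_ rfl
    funext i
    show (if i = e then (0 : Fin 1 → F) 0 else 0) = 0
    by_cases h : i = e <;> simp [h]
  · refine LinearMap.ext fun p => Prod.ext ?_ ?_
    · funext i
      show (if i = e then (0 : Fin 1 → F) 0 else 0) = 0
      by_cases h : i = e <;> simp [h]
    · show (fun i => if i = e then (jordan F 1 p.1) 0 else 0) = jordan F n _
      have h1 : (jordan F 1 p.1) 0 = p.1 0 := by
        simp [jordan]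
      rw [h1]; exact (key (p.1 0)).symm
  · refine LinearMap.ext fun p => rfl
  · refine LinearMap.ext fun p => Prod.ext rfl ?_
    funext j
    show (jordan F n p.1) (Fin.castLE hle j) = (jordan F (n-1) (fun j => p.1 (Fin.castLE hle j))) j
    simp only [jordan, LinearMap.coe_mk, AddHom.coe_mk]
    have hv : ((Fin.castLE hle j : Fin n) : ℕ) = (j : ℕ) := rfl
    by_cases h : 1 ≤ (j : ℕ)
    · rw [dif_pos (by rw [hv]; exact h), dif_pos h]
      congr 1
    · rw [dif_neg (by rw [hv]; exact h), dif_neg h]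
  · intro p q hpq
    have h1 := congrArg (fun z : Bcar F n => z.1 e) hpq
    have h2 := congrArg (fun z : Bcar F n => z.2 e) hpq
    simp only [f, LinearMap.coe_mk, AddHom.coe_mk, if_pos rfl] at h1 h2
    refine Prod.ext ?_ ?_ <;> funext i <;> rw [Subsingleton.elim i 0]
    exacts [h1, h2]
  · intro q
    refine ⟨(fun i => if h : (i : ℕ) < n - 1 then q.1 ⟨i, h⟩ else 0,
      fun i => if h : (i : ℕ) < n - 1 then q.2 ⟨i, h⟩ else 0), ?_⟩
    refine Prod.ext ?_ ?_ <;> funext j <;>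
      simp [g, dif_pos (show ((Fin.castLE hle j : Fin n) : ℕ) < n - 1 from j.isLt)]
  · ext p
    simp only [LinearMap.mem_range, LinearMap.mem_ker]
    constructor
    · rintro ⟨q, rfl⟩
      refine Prod.ext ?_ ?_ <;> funext j <;>
        · show (if (Fin.castLE hle j : Fin n) = e then _ else (0:F)) = 0
          rw [if_neg]
          intro hcon
          have := congrArg Fin.val hcon
          simp [he] at this
          omega
    · intro hp
      have h1 : ∀ i : Fin n, (i : ℕ) < n - 1 → p.1 i = 0 := by
        intro i hi
        have := congrArg (fun z : Bcar F (n-1) => z.1 ⟨(i:ℕ), hi⟩) hp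
        simpa [g] using this
      have h2 : ∀ i : Fin n, (i : ℕ) < n - 1 → p.2 i = 0 := by
        intro i hi
        have := congrArg (fun z : Bcar F (n-1) => z.2 ⟨(i:ℕ), hi⟩) hp
        simpa [g] using this
      refine ⟨(fun _ => p.1 e, fun _ => p.2 e), ?_⟩
      refine Prod.ext ?_ ?_ <;> funext i <;>
        · show (if i = e then _ else (0:F)) = _
          by_cases h : i = e
          · rw [if_pos h, h]
          · rw [if_neg h]
            have hi : (i : ℕ) < n - 1 := by
              have hne : (i : ℕ) ≠ n - 1 := fun hv => h (Fin.ext hv)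
              have := i.isLt
              omega
            first
            | exact (h1 i hi).symm
            | exact (h2 i hi).symm
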